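/- Let ν ∈ (0,1], let S ⊆ ℝⁿ be a convex set, and let h : ℝⁿ → ℝ. Then h is ν-paraconvex on S (i.e., there exists ρ ≥ 0 such that h(λx+(1−λ)y) ≤ λh(x) + (1−λ)h(y) + ρ·min{λ,1−λ}·‖x−y‖^{1+ν} for all x, y ∈ S and λ ∈ [0,1]) if and only if there exists a constant C ≥ 0 such that h(λx+(1−λ)y) ≤ λh(x) + (1−λ)h(y) + C·‖x−y‖^{1+ν} for all x, y ∈ S and λ ∈ [0,1]. -/
import Mathlib

private lemma paraconvex_aux {n : ℕ} (ν : ℝ) (hν0 : 0 < ν)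
    (S : Set (EuclideanSpace ℝ (Fin n))) (hS : Convex ℝ S)
    (h : EuclideanSpace ℝ (Fin n) → ℝ) (C : ℝ) (hC : 0 ≤ C)
    (H : ∀ x ∈ S, ∀ y ∈ S, ∀ t ∈ Set.Icc (0 : ℝ) 1,
        h (t • x + (1 - t) • y) ≤ t * h x + (1 - t) * h y + C * ‖x - y‖ ^ (1 + ν))
    (ρ : ℝ) (hρ1 : 4 * C ≤ ρ) (hρ2 : 2 * C + ρ * (2 : ℝ) ^ (-ν) ≤ ρ) :
    ∀ k : ℕ, ∀ x ∈ S, ∀ y ∈ S, ∀ t : ℝ, (1/2 : ℝ) ^ (k + 2) < t → t ≤ 1/2 →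
      h (t • x + (1 - t) • y) ≤ t * h x + (1 - t) * h y + ρ * t * ‖x - y‖ ^ (1 + ν) := by
  intro k
  induction k with
  | zero =>
    intro x hx y hy t ht1 ht2
    have ht1' : (1/4 : ℝ) < t := by norm_num at ht1; linarith
    have hA : (0 : ℝ) ≤ ‖x - y‖ ^ (1 + ν) := Real.rpow_nonneg (norm_nonneg _) _
    have hρ0 : 0 ≤ ρ := le_trans (by linarith) hρ1
    have := H x hx y hy t ⟨by linarith, by linarith⟩
    nlinarith [mul_le_mul_of_nonneg_right hρ1 hA,
      mul_le_mul_of_nonneg_right (mul_le_mul_of_nonneg_left ht1'.le hρ0) hA]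
  | succ k ih =>
    intro x hx y hy t ht1 ht2
    by_cases hc : (1/4 : ℝ) < t
    · have hA : (0 : ℝ) ≤ ‖x - y‖ ^ (1 + ν) := Real.rpow_nonneg (norm_nonneg _) _
      have hρ0 : 0 ≤ ρ := le_trans (by linarith) hρ1
      have := H x hx y hy t ⟨by linarith, by linarith⟩
      nlinarith [mul_le_mul_of_nonneg_right hρ1 hA,
        mul_le_mul_of_nonneg_right (mul_le_mul_of_nonneg_left (le_of_lt hc) hρ0) hA]
    · push_neg at hc
      have ht0 : (0 : ℝ) < t := lt_trans (by positivity) ht1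
      set m : EuclideanSpace ℝ (Fin n) := (1/2 : ℝ) • x + (1/2 : ℝ) • y with hm_def
      have hmS : m ∈ S := by
        have := hS hx hy (by norm_num : (0:ℝ) ≤ 1/2) (by norm_num : (0:ℝ) ≤ 1/2)
          (by norm_num)
        simpa [hm_def] using this
      have ht1' : (1/2 : ℝ) ^ (k + 2) < 2 * t := by
        have : (1/2 : ℝ) ^ (k + 3) < t := by
          have e : k + 1 + 2 = k + 3 := by omega
          rwa [e] at ht1
        calc (1/2 : ℝ) ^ (k + 2) = 2 * (1/2 : ℝ) ^ (k + 3) := by ring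
        _ < 2 * t := by linarith
      have ih' := ih m hmS y hy (2 * t) ht1' (by linarith)
      have hpt : (2 * t) • m + (1 - 2 * t) • y = t • x + (1 - t) • y := by
        rw [hm_def]; module
      have hnorm : ‖m - y‖ = (1/2 : ℝ) * ‖x - y‖ := by
        have : m - y = (1/2 : ℝ) • (x - y) := by rw [hm_def]; module
        rw [this, norm_smul]; norm_num
      have hA : (0 : ℝ) ≤ ‖x - y‖ ^ (1 + ν) := Real.rpow_nonneg (norm_nonneg _) _
      have hpow : ‖m - y‖ ^ (1 + ν) = ((1/2 : ℝ) * (2:ℝ) ^ (-ν)) * ‖x - y‖ ^ (1 + ν) := by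
        rw [hnorm, Real.mul_rpow (by norm_num) (norm_nonneg _)]
        have : ((1:ℝ)/2) ^ (1 + ν) = (1/2 : ℝ) * (2:ℝ) ^ (-ν) := by
          rw [Real.rpow_add (by norm_num : (0:ℝ) < 1/2), Real.rpow_one]
          congr 1
          rw [one_div, Real.inv_rpow (by norm_num : (0:ℝ) ≤ 2),
            ← Real.rpow_neg (by norm_num : (0:ℝ) ≤ 2)]
        rw [this]
      rw [hpt, hpow] at ih'
      have hmid := H x hx y hy (1/2) ⟨by norm_num, by norm_num⟩
      norm_num at hmid
      rw [← hm_def] at hmid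
      -- combine
      have h2t : (0 : ℝ) ≤ 2 * t := by linarith
      nlinarith [mul_le_mul_of_nonneg_left hmid h2t,
        mul_le_mul_of_nonneg_right hρ2 (mul_nonneg ht0.le hA)]

theorem paraconvex_iff_no_min {n : ℕ} (ν : ℝ) (hν : ν ∈ Set.Ioc (0 : ℝ) 1)
    (S : Set (EuclideanSpace ℝ (Fin n))) (hS : Convex ℝ S)
    (h : EuclideanSpace ℝ (Fin n) → ℝ) :
    (∃ ρ : ℝ, 0 ≤ ρ ∧ ∀ x ∈ S, ∀ y ∈ S, ∀ t ∈ Set.Icc (0 : ℝ) 1,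
        h (t • x + (1 - t) • y) ≤
          t * h x + (1 - t) * h y + ρ * min t (1 - t) * ‖x - y‖ ^ (1 + ν))
      ↔
    (∃ C : ℝ, 0 ≤ C ∧ ∀ x ∈ S, ∀ y ∈ S, ∀ t ∈ Set.Icc (0 : ℝ) 1,
        h (t • x + (1 - t) • y) ≤
          t * h x + (1 - t) * h y + C * ‖x - y‖ ^ (1 + ν)) := by
  obtain ⟨hν0, hν1⟩ := hν
  constructor
  · rintro ⟨ρ, hρ0, hρ⟩
    refine ⟨ρ, hρ0, fun x hx y hy t ht => ?_⟩
    have hA : (0 : ℝ) ≤ ‖x - y‖ ^ (1 + ν) := Real.rpow_nonneg (norm_nonneg _) _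
    have := hρ x hx y hy t ht
    have hmin : min t (1 - t) ≤ 1 := le_trans (min_le_left _ _) ht.2
    nlinarith [mul_nonneg hρ0 hA]
  · rintro ⟨C, hC, H⟩
    have h2ν : (2:ℝ) ^ (-ν) < 1 := Real.rpow_lt_one_of_one_lt_of_neg (by norm_num) (by linarith)
    have h2ν0 : (0:ℝ) < (2:ℝ) ^ (-ν) := Real.rpow_pos_of_pos (by norm_num) _
    set ρ := max (4 * C) (2 * C / (1 - (2:ℝ) ^ (-ν))) with hρ_def
    have hρ1 : 4 * C ≤ ρ := le_max_left _ _
    have hρ0 : 0 ≤ ρ := le_trans (by linarith) hρ1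
    have hρ2 : 2 * C + ρ * (2:ℝ) ^ (-ν) ≤ ρ := by
      have h1 : 2 * C / (1 - (2:ℝ) ^ (-ν)) ≤ ρ := le_max_right _ _
      have h2 : (0:ℝ) < 1 - (2:ℝ) ^ (-ν) := by linarith
      rw [div_le_iff₀ h2] at h1
      nlinarith
    have key : ∀ x ∈ S, ∀ y ∈ S, ∀ t : ℝ, 0 < t → t ≤ 1/2 →
        h (t • x + (1 - t) • y) ≤ t * h x + (1 - t) * h y + ρ * t * ‖x - y‖ ^ (1 + ν) := by
      intro x hx y hy t ht0 ht2
      obtain ⟨k, hk⟩ := exists_pow_lt_of_lt_one ht0 (by norm_num : (1/2 : ℝ) < 1)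
      have hk' : (1/2 : ℝ) ^ (k + 2) < t :=
        lt_of_le_of_lt (pow_le_pow_of_le_one (by norm_num) (by norm_num) (by omega)) hk
      exact paraconvex_aux ν hν0 S hS h C hC H ρ hρ1 hρ2 k x hx y hy t hk' ht2
    refine ⟨ρ, hρ0, fun x hx y hy t ht => ?_⟩
    obtain ⟨ht0, ht1⟩ := ht
    have hA : (0 : ℝ) ≤ ‖x - y‖ ^ (1 + ν) := Real.rpow_nonneg (norm_nonneg _) _
    rcases eq_or_lt_of_le ht0 with h0 | h0
    · subst h0
      simp
    · by_cases hhalf : t ≤ 1/2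
      · rw [min_eq_left (by linarith : t ≤ 1 - t)]
        exact key x hx y hy t h0 hhalf
      · push_neg at hhalf
        rw [min_eq_right (by linarith : 1 - t ≤ t)]
        rcases eq_or_lt_of_le ht1 with h1 | h1
        · subst h1
          simp
        · have hs0 : (0:ℝ) < 1 - t := by linarith
          have hs2 : 1 - t ≤ 1/2 := by linarith
          have hk := key y hy x hx (1 - t) hs0 hs2
          have hpt : (1 - t) • y + (1 - (1 - t)) • x = t • x + (1 - t) • y := by module
          rw [hpt, norm_sub_rev] at hk
          linarith
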